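/- Lower bound forcing the weight exponent: let n ≥ 1, s > 0, q ≥ 1 and α > -n, and suppose the weighted maximal estimate (∫_{ℝⁿ} |sup_{t∈ℝ} B_t f(x)|^q |x|^α dx)^{1/q} ≤ C ‖f‖_{Ḣ^s(ℝⁿ)} holds for all radial Schwartz f. Then α = q(n/2 − s) − n. -/

import Mathlib

open scoped FourierTransform RealInnerProductSpace
open MeasureTheory Real


open scoped FourierTransform RealInnerProductSpace
open MeasureTheory Real

noncomputable section BW

/-- A smooth compactly supported function is a Schwartz function. -/
def schwartzOfCompactSupport {E F : Type*} [NormedAddCommGroup E] [NormedSpace ℝ E]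
    [NormedAddCommGroup F] [NormedSpace ℝ F] (f : E → F)
    (hsm : ContDiff ℝ (⊤ : ℕ∞) f) (hcs : HasCompactSupport f) : SchwartzMap E F where
  toFun := f
  smooth' := hsm
  decay' := by
    intro k m
    have hD : HasCompactSupport (iteratedFDeriv ℝ m f) := hcs.iteratedFDeriv m
    obtain ⟨C, hC⟩ := hD.exists_bound_of_continuous
      (hsm.continuous_iteratedFDeriv (by exact_mod_cast le_top))
    have hC0 : 0 ≤ C := le_trans (norm_nonneg _) (hC 0)
    obtain ⟨R₀, hR₀⟩ := hD.isCompact.isBounded.subset_closedBall 0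
    set R := max R₀ 0 with hRdef
    have hR : tsupport (iteratedFDeriv ℝ m f) ⊆ Metric.closedBall 0 R :=
      hR₀.trans (Metric.closedBall_subset_closedBall (le_max_left _ _))
    have hR0 : 0 ≤ R := le_max_right _ _
    refine ⟨R ^ k * C, fun x => ?_⟩
    by_cases hx : x ∈ tsupport (iteratedFDeriv ℝ m f)
    · have hxR : ‖x‖ ≤ R := by simpa using hR hx
      exact mul_le_mul (pow_le_pow_left₀ (norm_nonneg _) hxR k) (hC x) (norm_nonneg _)
        (by positivity)
    · rw [image_eq_zero_of_notMem_tsupport hx]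
      simp only [norm_zero, mul_zero]
      positivity

theorem exp_eq_of_rpow_le {A B a b : ℝ} (hA : 0 < A)
    (h : ∀ l : ℝ, 0 < l → A * l ^ a ≤ B * l ^ b) : a = b := by
  have hB : 0 < B := by
    have := h 1 one_pos
    simp only [Real.one_rpow, mul_one] at this
    linarith
  by_contra hab
  have hd : a - b ≠ 0 := sub_ne_zero.mpr hab
  have key : ∀ l : ℝ, 0 < l → A * l ^ (a - b) ≤ B := by
    intro l hl
    have h0 := h l hl
    have hlb : (0:ℝ) < l ^ b := Real.rpow_pos_of_pos hl b
    have : A * l ^ (a - b) * l ^ b ≤ B * l ^ b := by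
      rw [mul_assoc, ← Real.rpow_add hl]
      simpa [sub_add_cancel] using h0
    exact le_of_mul_le_mul_right this hlb
  set c : ℝ := Real.log (B / A) + 1 with hc
  have hl : (0:ℝ) < Real.exp (c / (a - b)) := Real.exp_pos _
  have hpow : (Real.exp (c / (a - b))) ^ (a - b) = Real.exp c := by
    rw [Real.rpow_def_of_pos (Real.exp_pos _), Real.log_exp]
    congr 1
    field_simp
  have h1 : A * Real.exp c ≤ B := by
    have := key _ hl
    rwa [hpow] at this
  have hBA : (0:ℝ) < B / A := div_pos hB hA
  have hgt : B / A < Real.exp c := by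
    rw [hc, Real.exp_add, Real.exp_log hBA]
    nlinarith [Real.exp_one_gt_d9]
  have h2 : Real.exp c ≤ B / A := (le_div_iff₀ hA).mpr (by linarith)
  linarith

end BW
section BW2
open scoped FourierTransform RealInnerProductSpace
open MeasureTheory Real

noncomputable section

variable {n : ℕ}

/-- Radial smooth bump: equals 1 on the unit ball, vanishes outside radius 2. -/
def phiR (n : ℕ) (x : EuclideanSpace ℝ (Fin n)) : ℝ :=
  Real.smoothTransition ((4 - ‖x‖ ^ 2) / 3)

lemma phiR_contDiff : ContDiff ℝ (⊤ : ℕ∞) (phiR n) :=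
  Real.smoothTransition.contDiff.comp
    ((contDiff_const.sub (contDiff_norm_sq ℝ)).div_const 3)

lemma phiR_one {x : EuclideanSpace ℝ (Fin n)} (hx : ‖x‖ ≤ 1) : phiR n x = 1 := by
  apply Real.smoothTransition.one_of_one_le
  have h2 : ‖x‖ ^ 2 ≤ 1 := by nlinarith [norm_nonneg x]
  linarith

lemma phiR_zero {x : EuclideanSpace ℝ (Fin n)} (hx : 2 ≤ ‖x‖) : phiR n x = 0 := by
  apply Real.smoothTransition.zero_of_nonpos
  have h2 : (4:ℝ) ≤ ‖x‖ ^ 2 := by nlinarith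
  linarith

/-- The rescaled radial Schwartz test family. -/
def testF (n : ℕ) (l : ℝ) (hl : 0 < l) : SchwartzMap (EuclideanSpace ℝ (Fin n)) ℂ :=
  schwartzOfCompactSupport (fun x => ((phiR n (l • x) : ℝ) : ℂ))
    (Complex.ofRealCLM.contDiff.comp (phiR_contDiff.comp (contDiff_id.const_smul l)))
    (by
      apply HasCompactSupport.intro (isCompact_closedBall (0 : EuclideanSpace ℝ (Fin n)) (2 / l))
      intro x hx
      simp only [Metric.mem_closedBall, dist_zero_right, not_le] at hx
      have : (2:ℝ) ≤ ‖l • x‖ := by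
        rw [norm_smul, Real.norm_eq_abs, abs_of_pos hl]
        rw [div_lt_iff₀ hl] at hx
        nlinarith
      simp [phiR_zero this])

lemma testF_apply (l : ℝ) (hl : 0 < l) (x : EuclideanSpace ℝ (Fin n)) :
    testF n l hl x = ((phiR n (l • x) : ℝ) : ℂ) := rfl

lemma fourier_testF (l : ℝ) (hl : 0 < l) (ξ : EuclideanSpace ℝ (Fin n)) :
    𝓕 (⇑(testF n l hl)) ξ = (l ^ n)⁻¹ • 𝓕 (⇑(testF n 1 one_pos)) (l⁻¹ • ξ) := by
  rw [Real.fourier_eq, Real.fourier_eq]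
  have key := MeasureTheory.Measure.integral_comp_smul (volume : Measure (EuclideanSpace ℝ (Fin n)))
    (fun v => 𝐞 (-⟪v, l⁻¹ • ξ⟫) • (testF n 1 one_pos) v) l
  have heq : (fun x => 𝐞 (-⟪x, ξ⟫) • (testF n l hl) x)
      = fun x => 𝐞 (-⟪l • x, l⁻¹ • ξ⟫) • (testF n 1 one_pos) (l • x) := by
    funext x
    rw [real_inner_smul_left, real_inner_smul_right, ← mul_assoc, mul_inv_cancel₀ hl.ne',
      one_mul]
    congr 1
    rw [testF_apply, testF_apply, one_smul]
  rw [heq]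
  rw [key, finrank_euclideanSpace_fin, abs_of_nonneg (by positivity)]

end
end BW2

section BW3
open scoped FourierTransform RealInnerProductSpace
open MeasureTheory Real

noncomputable section
variable {n : ℕ}

lemma rhs_scaling (s : ℝ) (l : ℝ) (hl : 0 < l) :
    ∫ ξ : EuclideanSpace ℝ (Fin n), ‖ξ‖ ^ (2*s) * ‖𝓕 (⇑(testF n l hl)) ξ‖ ^ 2
      = l ^ (2*s - n) *
        ∫ η : EuclideanSpace ℝ (Fin n), ‖η‖ ^ (2*s) * ‖𝓕 (⇑(testF n 1 one_pos)) η‖ ^ 2 := by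
  set G := 𝓕 (⇑(testF n 1 one_pos)) with hG
  set H : EuclideanSpace ℝ (Fin n) → ℝ :=
    fun η => ‖l • η‖ ^ (2*s) * ‖(l ^ n)⁻¹ • G η‖ ^ 2 with hH
  have h1 : ∀ ξ : EuclideanSpace ℝ (Fin n),
      ‖ξ‖ ^ (2*s) * ‖𝓕 (⇑(testF n l hl)) ξ‖ ^ 2 = H (l⁻¹ • ξ) := by
    intro ξ
    rw [hH]
    simp only [fourier_testF l hl ξ, smul_smul, mul_inv_cancel₀ hl.ne', one_smul]
    rfl
  simp_rw [h1]
  rw [MeasureTheory.Measure.integral_comp_inv_smul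
    (volume : Measure (EuclideanSpace ℝ (Fin n))) H l, finrank_euclideanSpace_fin]
  have h2 : ∀ η : EuclideanSpace ℝ (Fin n),
      H η = (l ^ (2*s) * ((l:ℝ) ^ n)⁻¹ ^ 2) * (‖η‖ ^ (2*s) * ‖G η‖ ^ 2) := by
    intro η
    show ‖l • η‖ ^ (2*s) * ‖(l ^ n)⁻¹ • G η‖ ^ 2 = _
    rw [norm_smul, norm_smul, Real.norm_eq_abs, Real.norm_eq_abs, abs_of_pos hl,
      Real.mul_rpow hl.le (norm_nonneg _), mul_pow, abs_of_nonneg (by positivity)]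
    ring
  simp_rw [h2]
  rw [show (fun x : EuclideanSpace ℝ (Fin n) =>
        l ^ (2*s) * ((l:ℝ) ^ n)⁻¹ ^ 2 * (‖x‖ ^ (2*s) * ‖G x‖ ^ 2))
      = (fun x : EuclideanSpace ℝ (Fin n) =>
        (l ^ (2*s) * ((l:ℝ) ^ n)⁻¹ ^ 2) • (‖x‖ ^ (2*s) * ‖G x‖ ^ 2)) from rfl]
  rw [MeasureTheory.integral_smul, smul_eq_mul, smul_eq_mul,
    abs_of_nonneg (by positivity : (0:ℝ) ≤ l ^ n), ← mul_assoc]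
  congr 1
  rw [← Real.rpow_natCast l n, ← Real.rpow_neg hl.le, ← Real.rpow_natCast (l ^ (-(n:ℝ))) 2,
    ← Real.rpow_mul hl.le, ← Real.rpow_add hl, ← Real.rpow_add hl]
  congr 1
  push_cast
  ring

lemma inner_at_zero (l : ℝ) (hl : 0 < l) (x : EuclideanSpace ℝ (Fin n)) :
    (∫ ξ : EuclideanSpace ℝ (Fin n),
        Complex.exp (Complex.I * ((⟪x, ξ⟫ : ℝ) : ℂ)) * 𝓕 (⇑(testF n l hl)) ξ)
      = testF n l hl ((2 * π)⁻¹ • x) := by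
  have hinv := (testF n l hl).continuous.fourierInv_fourier_eq (testF n l hl).integrable
    (by
      rw [← SchwartzMap.fourier_coe]
      exact (SchwartzMap.fourierTransformCLM ℝ (testF n l hl)).integrable)
  have := congrFun hinv ((2 * π)⁻¹ • x)
  rw [Real.fourierInv_eq'] at this
  rw [← this]
  congr 1
  funext v
  rw [real_inner_smul_right, smul_eq_mul]
  have h2π : (2 * π) * ((2 * π)⁻¹ * ⟪v, x⟫) = ⟪v, x⟫ := by
    rw [← mul_assoc, mul_inv_cancel₀ (by positivity), one_mul]
  rw [h2π, real_inner_comm v x, mul_comm Complex.I ((⟪v, x⟫ : ℝ) : ℂ)]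

end
end BW3


/-- If the weighted maximal estimate for the Boussinesq maximal operator
`B**f(x) = sup_t |B_t f(x)|` holds (with weight `|x|^α`) for all radial
Schwartz functions, then necessarily `α = q(n/2 − s) − n`. -/
theorem weight_exponent_forced (n : ℕ) (hn : 1 ≤ n) (s q α : ℝ)
    (hs : 0 < s) (hq : 1 ≤ q) (hα : -(n : ℝ) < α) (C : ℝ)
    (h : ∀ f : SchwartzMap (EuclideanSpace ℝ (Fin n)) ℂ,
      (∀ x y : EuclideanSpace ℝ (Fin n), ‖x‖ = ‖y‖ → f x = f y) →
      (∫⁻ x : EuclideanSpace ℝ (Fin n),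
          ENNReal.ofReal
            ((⨆ t : ℝ, ‖(((2 * π : ℝ) ^ n)⁻¹ : ℂ) *
                ∫ ξ, Complex.exp (Complex.I *
                    ((⟪x, ξ⟫ + t * ‖ξ‖ * Real.sqrt (1 + ‖ξ‖ ^ 2) : ℝ) : ℂ)) *
                  𝓕 (f : EuclideanSpace ℝ (Fin n) → ℂ) ξ‖) ^ q * ‖x‖ ^ α))
            ^ ((1 : ℝ) / q)
        ≤ ENNReal.ofReal (C *
            (∫ ξ : EuclideanSpace ℝ (Fin n),
              ‖ξ‖ ^ (2 * s) * ‖𝓕 (f : EuclideanSpace ℝ (Fin n) → ℂ) ξ‖ ^ 2)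
              ^ ((1 : ℝ) / 2))) :
    α = q * ((n : ℝ) / 2 - s) - n := by

  classical
  have hq0 : (0:ℝ) < q := lt_of_lt_of_le one_pos hq
  have hπ : (0:ℝ) < 2 * π := by positivity
  haveI : Nontrivial (EuclideanSpace ℝ (Fin n)) :=
    Module.nontrivial_of_finrank_pos (R := ℝ) (by rw [finrank_euclideanSpace_fin]; exact hn)
  -- constants
  set K₀ : ℝ := ∫ η : EuclideanSpace ℝ (Fin n),
      ‖η‖ ^ (2*s) * ‖𝓕 (⇑(testF n 1 one_pos)) η‖ ^ 2 with hK₀def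
  have hK₀ : 0 ≤ K₀ := integral_nonneg (fun η => by positivity)
  set v : ℝ := (volume (Metric.ball (0 : EuclideanSpace ℝ (Fin n)) 1)).toReal with hvdef
  have hvpos : 0 < v := ENNReal.toReal_pos
    (Metric.measure_ball_pos volume 0 one_pos).ne' (measure_ball_lt_top).ne
  have hvol : volume (Metric.ball (0 : EuclideanSpace ℝ (Fin n)) 1) = ENNReal.ofReal v :=
    (ENNReal.ofReal_toReal measure_ball_lt_top.ne).symm
  set μα : ℝ := min ((2:ℝ) ^ (-α)) 1 with hμαdef
  have hμα : 0 < μα := lt_min (Real.rpow_pos_of_pos two_pos _) one_pos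
  set cq : ℝ := (((2*π:ℝ) ^ n)⁻¹) ^ q with hcqdef
  have hcq : 0 < cq := Real.rpow_pos_of_pos (by positivity) _
  set D : ℝ := cq * ((2*π) ^ α) * μα * ((2*π/8) ^ (n:ℝ)) * v with hDdef
  have hD : 0 < D := by
    apply mul_pos (mul_pos (mul_pos (mul_pos hcq ?_) hμα) ?_) hvpos
    · exact Real.rpow_pos_of_pos hπ _
    · exact Real.rpow_pos_of_pos (by positivity) _
  -- the key inequality for every scale l > 0
  have hmain : ∀ l : ℝ, 0 < l →
      D ^ ((1:ℝ)/q) * l ^ (-(α + (n:ℝ)) * ((1:ℝ)/q))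
        ≤ (C * K₀ ^ ((1:ℝ)/2)) * l ^ ((2*s - (n:ℝ)) * ((1:ℝ)/2)) := by
    intro l hl
    have hrad : ∀ x y : EuclideanSpace ℝ (Fin n), ‖x‖ = ‖y‖ →
        testF n l hl x = testF n l hl y := by
      intro x y hxy
      rw [testF_apply, testF_apply]
      unfold phiR
      rw [norm_smul, norm_smul, hxy]
    have H := h (testF n l hl) hrad
    set r : ℝ := 2 * π / l with hrdef
    have hr : 0 < r := by positivity
    set e₀ : EuclideanSpace ℝ (Fin n) := EuclideanSpace.single (⟨0, hn⟩ : Fin n) (1:ℝ)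
      with he₀def
    have he₀ : ‖e₀‖ = 1 := by rw [he₀def, EuclideanSpace.norm_single]; simp
    set x₀ : EuclideanSpace ℝ (Fin n) := (3*r/4) • e₀ with hx₀def
    have hx₀ : ‖x₀‖ = 3*r/4 := by
      rw [hx₀def, norm_smul, he₀, mul_one, Real.norm_eq_abs, abs_of_pos (by positivity)]
    set B : Set (EuclideanSpace ℝ (Fin n)) := Metric.ball x₀ (r/8) with hBdef
    have hgeom : ∀ x ∈ B, r/2 ≤ ‖x‖ ∧ ‖x‖ ≤ r := by
      intro x hx
      rw [hBdef, Metric.mem_ball, dist_eq_norm] at hx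
      have h1 : ‖x‖ ≤ ‖x₀‖ + ‖x - x₀‖ := by
        calc ‖x‖ = ‖x₀ + (x - x₀)‖ := by rw [add_sub_cancel]
          _ ≤ ‖x₀‖ + ‖x - x₀‖ := norm_add_le _ _
      have h2 : ‖x₀‖ - ‖x₀ - x‖ ≤ ‖x‖ := by
        have := norm_sub_norm_le x₀ x
        linarith
      rw [norm_sub_rev x₀ x] at h2
      rw [hx₀] at h1 h2
      constructor <;> linarith
    -- norm of the constant
    have hcnorm : ‖((((2 * π : ℝ)) : ℂ) ^ n)⁻¹‖ = (((2*π:ℝ)) ^ n)⁻¹ := by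
      rw [norm_inv, norm_pow, Complex.norm_real, Real.norm_eq_abs, abs_of_pos hπ]
    have hexp1 : ∀ u : ℝ, ‖Complex.exp (Complex.I * (u:ℂ))‖ = 1 := by
      intro u
      rw [mul_comm, Complex.norm_exp_ofReal_mul_I]
    -- lower bound for the sup, for x in B
    have hS : ∀ x ∈ B, (((2*π:ℝ)) ^ n)⁻¹ ≤
        ⨆ t : ℝ, ‖(((2 * π : ℝ) ^ n)⁻¹ : ℂ) *
          ∫ ξ, Complex.exp (Complex.I *
              ((⟪x, ξ⟫ + t * ‖ξ‖ * Real.sqrt (1 + ‖ξ‖ ^ 2) : ℝ) : ℂ)) *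
            𝓕 (⇑(testF n l hl)) ξ‖ := by
      intro x hx
      apply le_ciSup_of_le ?_ (0 : ℝ)
      · -- value at t = 0
        have hphase : ∀ ξ : EuclideanSpace ℝ (Fin n),
            (⟪x, ξ⟫ + (0:ℝ) * ‖ξ‖ * Real.sqrt (1 + ‖ξ‖ ^ 2)) = ⟪x, ξ⟫ := by
          intro ξ; ring
        simp only [hphase]
        rw [inner_at_zero l hl x]
        have hval : testF n l hl ((2 * π)⁻¹ • x) = 1 := by
          rw [testF_apply]
          have hsm : ‖l • ((2 * π)⁻¹ • x)‖ ≤ 1 := by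
            rw [norm_smul, norm_smul, Real.norm_eq_abs, Real.norm_eq_abs,
              abs_of_pos hl, abs_of_pos (by positivity : (0:ℝ) < (2*π)⁻¹)]
            have hxr : ‖x‖ ≤ r := (hgeom x hx).2
            calc l * ((2*π)⁻¹ * ‖x‖) ≤ l * ((2*π)⁻¹ * r) := by
                  apply mul_le_mul_of_nonneg_left _ hl.le
                  exact mul_le_mul_of_nonneg_left hxr (by positivity)
              _ = 1 := by rw [hrdef]; field_simp
          rw [phiR_one hsm]
          norm_num
        rw [hval, mul_one, hcnorm]
      · refine ⟨‖((((2 * π : ℝ)) : ℂ) ^ n)⁻¹‖ *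
            ∫ ξ : EuclideanSpace ℝ (Fin n), ‖𝓕 (⇑(testF n l hl)) ξ‖, ?_⟩
        rintro y ⟨t, rfl⟩
        simp only
        rw [norm_mul]
        apply mul_le_mul_of_nonneg_left _ (norm_nonneg _)
        calc ‖∫ ξ : EuclideanSpace ℝ (Fin n), Complex.exp (Complex.I *
              ((⟪x, ξ⟫ + t * ‖ξ‖ * Real.sqrt (1 + ‖ξ‖ ^ 2) : ℝ) : ℂ)) *
                𝓕 (⇑(testF n l hl)) ξ‖
            ≤ ∫ ξ : EuclideanSpace ℝ (Fin n), ‖Complex.exp (Complex.I *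
              ((⟪x, ξ⟫ + t * ‖ξ‖ * Real.sqrt (1 + ‖ξ‖ ^ 2) : ℝ) : ℂ)) *
                𝓕 (⇑(testF n l hl)) ξ‖ := norm_integral_le_integral_norm _
          _ = ∫ ξ : EuclideanSpace ℝ (Fin n), ‖𝓕 (⇑(testF n l hl)) ξ‖ := by
              congr 1
              funext ξ
              rw [norm_mul, hexp1, one_mul]
    have hSnonneg : ∀ x ∈ B, (0:ℝ) ≤ (((2*π:ℝ)) ^ n)⁻¹ := fun x _ => by positivity
    -- pointwise lower bound of the integrand on B
    have hpt : ∀ x ∈ B, ENNReal.ofReal (cq * (r ^ α * μα)) ≤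
        ENNReal.ofReal
          ((⨆ t : ℝ, ‖(((2 * π : ℝ) ^ n)⁻¹ : ℂ) *
              ∫ ξ, Complex.exp (Complex.I *
                  ((⟪x, ξ⟫ + t * ‖ξ‖ * Real.sqrt (1 + ‖ξ‖ ^ 2) : ℝ) : ℂ)) *
                𝓕 (⇑(testF n l hl)) ξ‖) ^ q * ‖x‖ ^ α) := by
      intro x hx
      apply ENNReal.ofReal_le_ofReal
      have hSx := hS x hx
      have hq' : cq ≤ (⨆ t : ℝ, ‖(((2 * π : ℝ) ^ n)⁻¹ : ℂ) *
              ∫ ξ, Complex.exp (Complex.I *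
                  ((⟪x, ξ⟫ + t * ‖ξ‖ * Real.sqrt (1 + ‖ξ‖ ^ 2) : ℝ) : ℂ)) *
                𝓕 (⇑(testF n l hl)) ξ‖) ^ q := by
        rw [hcqdef]
        exact Real.rpow_le_rpow (by positivity) hSx hq0.le
      have hxα : r ^ α * μα ≤ ‖x‖ ^ α := by
        obtain ⟨hlb, hub⟩ := hgeom x hx
        rcases le_or_gt 0 α with hα0 | hα0
        · have h1 : (r/2) ^ α ≤ ‖x‖ ^ α :=
            Real.rpow_le_rpow (by positivity) hlb hα0
          have h2 : (r/2) ^ α = r ^ α * (2:ℝ) ^ (-α) := by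
            rw [Real.div_rpow hr.le (by norm_num), Real.rpow_neg (by norm_num),
              div_eq_mul_inv]
          have h3 : r ^ α * μα ≤ r ^ α * (2:ℝ) ^ (-α) :=
            mul_le_mul_of_nonneg_left (min_le_left _ _) (Real.rpow_nonneg hr.le _)
          linarith [h3, h2 ▸ h1]
        · have h1 : r ^ α ≤ ‖x‖ ^ α :=
            Real.rpow_le_rpow_of_nonpos (by linarith) hub hα0.le
          have h3 : r ^ α * μα ≤ r ^ α * 1 :=
            mul_le_mul_of_nonneg_left (min_le_right _ _) (Real.rpow_nonneg hr.le _)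
          rw [mul_one] at h3
          linarith
      exact mul_le_mul hq' hxα (by positivity) (le_trans hcq.le hq')
    -- lintegral lower bound
    have hBmeas : MeasurableSet B := measurableSet_ball
    have hlow : ENNReal.ofReal (cq * (r ^ α * μα)) * volume B ≤
        ∫⁻ x : EuclideanSpace ℝ (Fin n),
          ENNReal.ofReal
            ((⨆ t : ℝ, ‖(((2 * π : ℝ) ^ n)⁻¹ : ℂ) *
                ∫ ξ, Complex.exp (Complex.I *
                    ((⟪x, ξ⟫ + t * ‖ξ‖ * Real.sqrt (1 + ‖ξ‖ ^ 2) : ℝ) : ℂ)) *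
                  𝓕 (⇑(testF n l hl)) ξ‖) ^ q * ‖x‖ ^ α) := by
      calc ENNReal.ofReal (cq * (r ^ α * μα)) * volume B
          = ∫⁻ _ in B, ENNReal.ofReal (cq * (r ^ α * μα)) :=
            (setLIntegral_const B _).symm
        _ ≤ ∫⁻ x in B, ENNReal.ofReal
            ((⨆ t : ℝ, ‖(((2 * π : ℝ) ^ n)⁻¹ : ℂ) *
                ∫ ξ, Complex.exp (Complex.I *
                    ((⟪x, ξ⟫ + t * ‖ξ‖ * Real.sqrt (1 + ‖ξ‖ ^ 2) : ℝ) : ℂ)) *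
                  𝓕 (⇑(testF n l hl)) ξ‖) ^ q * ‖x‖ ^ α) := by
            apply lintegral_mono_ae
            rw [ae_restrict_iff' hBmeas]
            exact MeasureTheory.ae_of_all _ hpt
        _ ≤ _ := setLIntegral_le_lintegral _ _
    -- volume of B
    have hvolB : volume B = ENNReal.ofReal ((r/8) ^ n) * ENNReal.ofReal v := by
      rw [hBdef, MeasureTheory.Measure.addHaar_ball volume x₀ (by positivity : (0:ℝ) ≤ r/8),
        finrank_euclideanSpace_fin, hvol]
    -- the real scalar identity
    have hreal : cq * (r ^ α * μα) * ((r/8) ^ n * v) = D * l ^ (-(α + (n:ℝ))) := by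
      have h1 : r ^ α = (2*π) ^ α * l ^ (-α) := by
        rw [hrdef, Real.div_rpow hπ.le hl.le, Real.rpow_neg hl.le, div_eq_mul_inv]
      have h2 : ((r/8):ℝ) ^ n = (2*π/8) ^ (n:ℝ) * l ^ (-(n:ℝ)) := by
        have hrr : (r/8) = (2*π/8) / l := by rw [hrdef]; ring
        rw [hrr, ← Real.rpow_natCast ((2*π/8)/l) n, Real.div_rpow (by positivity) hl.le,
          Real.rpow_neg hl.le, div_eq_mul_inv]
      rw [h1, h2, hDdef, show -(α + (n:ℝ)) = (-α) + (-(n:ℝ)) by ring, Real.rpow_add hl]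
      ring
    -- assemble the ENNReal chain
    have hchain : ENNReal.ofReal ((D * l ^ (-(α + (n:ℝ)))) ^ ((1:ℝ)/q)) ≤
        ENNReal.ofReal (C * (l ^ (2*s - (n:ℝ)) * K₀) ^ ((1:ℝ)/2)) := by
      have hDl : (0:ℝ) < D * l ^ (-(α + (n:ℝ))) :=
        mul_pos hD (Real.rpow_pos_of_pos hl _)
      rw [← ENNReal.ofReal_rpow_of_pos hDl]
      have e1 : ENNReal.ofReal (D * l ^ (-(α + (n:ℝ)))) ≤
          ∫⁻ x : EuclideanSpace ℝ (Fin n),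
          ENNReal.ofReal
            ((⨆ t : ℝ, ‖(((2 * π : ℝ) ^ n)⁻¹ : ℂ) *
                ∫ ξ, Complex.exp (Complex.I *
                    ((⟪x, ξ⟫ + t * ‖ξ‖ * Real.sqrt (1 + ‖ξ‖ ^ 2) : ℝ) : ℂ)) *
                  𝓕 (⇑(testF n l hl)) ξ‖) ^ q * ‖x‖ ^ α) := by
        rw [← hreal]
        calc ENNReal.ofReal (cq * (r ^ α * μα) * ((r/8) ^ n * v))
            = ENNReal.ofReal (cq * (r ^ α * μα)) *
              (ENNReal.ofReal ((r/8) ^ n) * ENNReal.ofReal v) := by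
              rw [← ENNReal.ofReal_mul (by positivity), ← ENNReal.ofReal_mul (by positivity)]
          _ = ENNReal.ofReal (cq * (r ^ α * μα)) * volume B := by rw [hvolB]
          _ ≤ _ := hlow
      have e2 := ENNReal.rpow_le_rpow e1 (by positivity : (0:ℝ) ≤ 1/q)
      refine le_trans e2 (le_trans H ?_)
      rw [rhs_scaling s l hl]
    have hext : (D * l ^ (-(α + (n:ℝ)))) ^ ((1:ℝ)/q) ≤
        C * (l ^ (2*s - (n:ℝ)) * K₀) ^ ((1:ℝ)/2) := by
      rcases ENNReal.ofReal_le_ofReal_iff'.mp hchain with h' | h'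
      · exact h'
      · exfalso
        have : (0:ℝ) < (D * l ^ (-(α + (n:ℝ)))) ^ ((1:ℝ)/q) :=
          Real.rpow_pos_of_pos (mul_pos hD (Real.rpow_pos_of_pos hl _)) _
        linarith
    have ha : (D * l ^ (-(α + (n:ℝ)))) ^ ((1:ℝ)/q)
        = D ^ ((1:ℝ)/q) * l ^ (-(α + (n:ℝ)) * ((1:ℝ)/q)) := by
      rw [Real.mul_rpow hD.le (Real.rpow_nonneg hl.le _), ← Real.rpow_mul hl.le]
    have hb : C * (l ^ (2*s - (n:ℝ)) * K₀) ^ ((1:ℝ)/2)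
        = C * (l ^ ((2*s - (n:ℝ)) * ((1:ℝ)/2)) * K₀ ^ ((1:ℝ)/2)) := by
      rw [Real.mul_rpow (Real.rpow_nonneg hl.le _) hK₀, ← Real.rpow_mul hl.le]
    rw [ha, hb] at hext
    calc D ^ ((1:ℝ)/q) * l ^ (-(α + (n:ℝ)) * ((1:ℝ)/q))
        ≤ C * (l ^ ((2*s - (n:ℝ)) * ((1:ℝ)/2)) * K₀ ^ ((1:ℝ)/2)) := hext
      _ = (C * K₀ ^ ((1:ℝ)/2)) * l ^ ((2*s - (n:ℝ)) * ((1:ℝ)/2)) := by ring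
  have hexp := exp_eq_of_rpow_le (Real.rpow_pos_of_pos hD _) hmain
  rw [mul_one_div, mul_one_div, div_eq_div_iff hq0.ne' (two_ne_zero)] at hexp
  linear_combination (-1/2 : ℝ) * hexp
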